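/- Assume (H3) and let Ξ and f̂ be as in the context. Then: (i) ‖f̂(ψ)‖₁ ≤ 2c‖ψ‖₁ for every ψ ∈ X; (ii) for every ρ > 0, setting C_ρ = 2(c + 2ρ‖k‖_∞), one has ‖f̂(ψ) − f̂(φ)‖₁ ≤ C_ρ‖ψ − φ‖₁ for every ψ, φ ∈ X with ‖φ‖₁ ≤ ρ. -/

import Mathlib

open MeasureTheory Set

noncomputable section

/-- `ℝ³` with the `ℓ¹` norm. -/
abbrev V3 : Type := PiLp 1 fun _ : Fin 3 => ℝ

/-- The state space `X = L¹([0,ω],ℝ³)` with norm `‖ψ‖₁ = ‖ψ₁‖₁+‖ψ₂‖₁+‖ψ₃‖₁`. -/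
abbrev XX (ω : ℝ) := Lp (α := ℝ) V3 1 (volume.restrict (Icc (0:ℝ) ω))

/-- `M` is the essential supremum of `|k|` on `[0,ω]²`. -/
def IsEssSupSq (ω : ℝ) (k : ℝ → ℝ → ℝ) (M : ℝ) : Prop :=
  (∀ᵐ z ∂((volume.restrict (Icc (0:ℝ) ω)).prod (volume.restrict (Icc (0:ℝ) ω))),
      |k z.1 z.2| ≤ M) ∧
    ∀ C : ℝ,
      (∀ᵐ z ∂((volume.restrict (Icc (0:ℝ) ω)).prod (volume.restrict (Icc (0:ℝ) ω))),
        |k z.1 z.2| ≤ C) → M ≤ C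

/-- The force of infection `Λ(a,ζ) = ∫₀^ω k(a,σ)ζ(σ)dσ`. -/
def Lam (ω : ℝ) (k : ℝ → ℝ → ℝ) (ζ : ℝ → ℝ) (a : ℝ) : ℝ :=
  ∫ σ in Icc (0:ℝ) ω, k a σ * ζ σ

/-- Pointwise values of the nonlinearity `f(ψ)(a) = (−Λ(a,ψ₂)ψ₁(a), Λ(a,ψ₂)ψ₁(a), 0)`. -/
def fval (ω : ℝ) (k : ℝ → ℝ → ℝ) (g : ℝ → V3) (a : ℝ) : Fin 3 → ℝ :=
  ![-(Lam ω k (fun σ => g σ 1) a) * g a 0,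
     (Lam ω k (fun σ => g σ 1) a) * g a 0, 0]


/-- Pointwise values of the truncated nonlinearity
`f̂(ψ)(a) = (−Ξ(Λ(a,ψ₂))ψ₁(a), Ξ(Λ(a,ψ₂))ψ₁(a), 0)`. -/
def fhatval (ω : ℝ) (k : ℝ → ℝ → ℝ) (Ξ : ℝ → ℝ) (g : ℝ → V3) (a : ℝ) : Fin 3 → ℝ :=
  ![-(Ξ (Lam ω k (fun σ => g σ 1) a)) * g a 0,
     (Ξ (Lam ω k (fun σ => g σ 1) a)) * g a 0, 0]

/- Auxiliary lemmas -/

lemma v3norm (x : V3) : ‖x‖ = |x 0| + |x 1| + |x 2| := by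
  rw [PiLp.norm_eq_sum (by norm_num)]
  simp [Fin.sum_univ_three, Real.norm_eq_abs]

lemma comp_sm (ω : ℝ) (ψ : XX ω) (i : Fin 3) :
    StronglyMeasurable (fun a => ψ a i) :=
  ((PiLp.proj (𝕜 := ℝ) 1 (fun _ : Fin 3 => ℝ) i).continuous).comp_stronglyMeasurable
    (Lp.stronglyMeasurable ψ)

lemma comp_integrable (ω : ℝ) (ψ : XX ω) (i : Fin 3) :
    Integrable (fun a => ψ a i) (volume.restrict (Icc (0:ℝ) ω)) := by
  have hψ := L1.integrable_coeFn ψ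
  refine hψ.norm.mono' (comp_sm ω ψ i).aestronglyMeasurable ?_
  filter_upwards with a
  rw [Real.norm_eq_abs, v3norm (ψ a)]
  have h0 := abs_nonneg (ψ a 0); have h1 := abs_nonneg (ψ a 1); have h2 := abs_nonneg (ψ a 2)
  fin_cases i <;> simp <;> linarith

lemma comp_integral_le (ω : ℝ) (ψ : XX ω) (i : Fin 3) :
    ∫ a in Icc (0:ℝ) ω, |ψ a i| ≤ ‖ψ‖ := by
  rw [L1.norm_eq_integral_norm ψ]
  refine integral_mono (comp_integrable ω ψ i).abs (L1.integrable_coeFn ψ).norm ?_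
  intro a
  simp only []
  rw [v3norm (ψ a)]
  have h0 := abs_nonneg (ψ a 0); have h1 := abs_nonneg (ψ a 1); have h2 := abs_nonneg (ψ a 2)
  fin_cases i <;> simp <;> linarith

lemma comp_diff_integral_le (ω : ℝ) (ψ φ : XX ω) (i : Fin 3) :
    ∫ a in Icc (0:ℝ) ω, |ψ a i - φ a i| ≤ ‖ψ - φ‖ := by
  have h : ∫ a in Icc (0:ℝ) ω, |ψ a i - φ a i|
      = ∫ a in Icc (0:ℝ) ω, |(ψ - φ) a i| := by
    refine integral_congr_ae ?_
    filter_upwards [Lp.coeFn_sub ψ φ] with a ha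
    rw [ha, Pi.sub_apply, PiLp.sub_apply]
  rw [h]
  exact comp_integral_le ω (ψ - φ) i

/-- under (H3), with `Ξ` as above and `F : X → X` realizing the truncated
nonlinearity `f̂`, one has (i) the sublinear growth `‖f̂(ψ)‖₁ ≤ 2c‖ψ‖₁` for all `ψ ∈ X`,
and (ii) for every `ρ > 0` the local Lipschitz estimate
`‖f̂(ψ) − f̂(φ)‖₁ ≤ C_ρ‖ψ − φ‖₁` with `C_ρ = 2(c + 2ρ‖k‖_∞)` whenever `‖φ‖₁ ≤ ρ`. -/
theorem fhat_growth_lipschitz (ω : ℝ) (hω : 0 < ω)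
    (k : ℝ → ℝ → ℝ) (Mk : ℝ)
    (hkmeas : Measurable (Function.uncurry k)) (hMk : IsEssSupSq ω k Mk)
    (hkpos : ∀ᵐ z ∂((volume.restrict (Icc (0:ℝ) ω)).prod (volume.restrict (Icc (0:ℝ) ω))),
      0 ≤ k z.1 z.2)
    (c : ℝ) (hc : 0 < c)
    (Ξ : ℝ → ℝ) (hΞdiff : Differentiable ℝ Ξ) (hΞderiv : Continuous (deriv Ξ))
    (hΞbdd : ∀ z : ℝ, |Ξ z| ≤ c)
    (hΞ' : ∀ z : ℝ, 0 ≤ deriv Ξ z ∧ deriv Ξ z ≤ 2)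
    (F : XX ω → XX ω)
    (hF : ∀ ψ : XX ω, ∀ᵐ a ∂(volume.restrict (Icc (0:ℝ) ω)),
      ∀ i : Fin 3, (F ψ) a i = fhatval ω k Ξ (⇑ψ) a i) :
    (∀ ψ : XX ω, ‖F ψ‖ ≤ 2 * c * ‖ψ‖) ∧
    (∀ ρ : ℝ, 0 < ρ → ∀ ψ φ : XX ω, ‖φ‖ ≤ ρ →
      ‖F ψ - F φ‖ ≤ 2 * (c + 2 * ρ * Mk) * ‖ψ - φ‖) := by
  set μ := volume.restrict (Icc (0:ℝ) ω) with hμ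
  -- Mk is nonnegative
  have hμne : μ.prod μ ≠ 0 := by
    intro h
    have h1 : μ.prod μ (Icc (0:ℝ) ω ×ˢ Icc (0:ℝ) ω) = 0 := by rw [h]; rfl
    rw [Measure.prod_prod, hμ, Measure.restrict_apply_self, Real.volume_Icc] at h1
    simp [ENNReal.ofReal_eq_zero] at h1
    linarith
  have hMk0 : 0 ≤ Mk := by
    have : (MeasureTheory.ae (μ.prod μ)).NeBot := ae_neBot.mpr hμne
    obtain ⟨z, hz⟩ := hMk.1.exists
    exact le_trans (abs_nonneg _) hz
  -- Ξ is 2-Lipschitz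
  have hΞlip : ∀ x y : ℝ, |Ξ x - Ξ y| ≤ 2 * |x - y| := by
    have hl : LipschitzWith 2 Ξ := by
      refine lipschitzWith_of_nnnorm_deriv_le hΞdiff fun x => ?_
      have h := hΞ' x
      rw [← NNReal.coe_le_coe, coe_nnnorm, Real.norm_eq_abs, abs_of_nonneg h.1]
      exact_mod_cast h.2
    intro x y
    have := hl.dist_le_mul x y
    simpa [Real.dist_eq] using this
  constructor
  · -- part (i)
    intro ψ
    have hbound : ∀ᵐ a ∂μ, ‖(F ψ) a‖ ≤ 2 * c * ‖ψ a‖ := by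
      filter_upwards [hF ψ] with a ha
      have hx : (F ψ) a = (WithLp.toLp 1 (fhatval ω k Ξ (⇑ψ) a) : V3) := PiLp.ext ha
      rw [hx, v3norm]
      simp only [PiLp.toLp_apply, fhatval, Matrix.cons_val_zero, Matrix.cons_val_one, Matrix.head_cons,
        Matrix.cons_val_two, Matrix.tail_cons]
      have hb : |Ξ (Lam ω k (fun σ => ψ σ 1) a) * ψ a 0| ≤ c * |ψ a 0| := by
        rw [abs_mul]
        exact mul_le_mul_of_nonneg_right (hΞbdd _) (abs_nonneg _)
      have h0 : |ψ a 0| ≤ ‖ψ a‖ := by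
        rw [v3norm]
        have h1 := abs_nonneg (ψ a 1); have h2 := abs_nonneg (ψ a 2)
        linarith
      rw [neg_mul, abs_neg, abs_zero]
      have := mul_le_mul_of_nonneg_left h0 hc.le
      linarith
    calc ‖F ψ‖ = ∫ a, ‖(F ψ) a‖ ∂μ := L1.norm_eq_integral_norm _
      _ ≤ ∫ a, 2 * c * ‖ψ a‖ ∂μ := by
          exact integral_mono_ae (L1.integrable_coeFn (F ψ)).norm
            (((L1.integrable_coeFn ψ).norm).const_mul _) hbound
      _ = 2 * c * ‖ψ‖ := by rw [integral_const_mul, ← L1.norm_eq_integral_norm]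
  · -- part (ii)
    intro ρ hρ ψ φ hφρ
    set D := ‖ψ - φ‖ with hD
    have hD0 : 0 ≤ D := norm_nonneg _
    set I := ∫ σ in Icc (0:ℝ) ω, |ψ σ 1 - φ σ 1| with hI
    have hI0 : 0 ≤ I := integral_nonneg fun σ => abs_nonneg _
    have hID : I ≤ D := comp_diff_integral_le ω ψ φ 1
    -- a.e. bound on the difference of Lam's
    have hkk : ∀ᵐ a ∂μ, ∀ᵐ σ ∂μ, |k a σ| ≤ Mk := Measure.ae_ae_of_ae_prod hMk.1
    have hLam : ∀ᵐ a ∂μ,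
        |Lam ω k (fun σ => ψ σ 1) a - Lam ω k (fun σ => φ σ 1) a| ≤ Mk * I := by
      filter_upwards [hkk] with a hka
      have hsm : Measurable fun σ => k a σ := hkmeas.comp measurable_prodMk_left
      have hint : ∀ χ : XX ω, Integrable (fun σ => k a σ * χ σ 1) μ := by
        intro χ
        refine (((comp_integrable ω χ 1).abs).const_mul Mk).mono'
          (hsm.aestronglyMeasurable.mul (comp_sm ω χ 1).aestronglyMeasurable) ?_
        filter_upwards [hka] with σ hσ
        rw [Real.norm_eq_abs, abs_mul]
        exact mul_le_mul_of_nonneg_right hσ (abs_nonneg _)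
      have hint3 : Integrable (fun σ => k a σ * (ψ σ 1 - φ σ 1)) μ := by
        have := (hint ψ).sub (hint φ)
        simpa [mul_sub, Pi.sub_def] using this
      have hint4 : Integrable (fun σ => Mk * |ψ σ 1 - φ σ 1|) μ :=
        (((comp_integrable ω ψ 1).sub (comp_integrable ω φ 1)).abs).const_mul Mk
      have hsub : Lam ω k (fun σ => ψ σ 1) a - Lam ω k (fun σ => φ σ 1) a
          = ∫ σ in Icc (0:ℝ) ω, k a σ * (ψ σ 1 - φ σ 1) := by
        rw [Lam, Lam, ← integral_sub (hint ψ) (hint φ)]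
        congr 1; funext σ; ring
      rw [hsub]
      calc |∫ σ in Icc (0:ℝ) ω, k a σ * (ψ σ 1 - φ σ 1)|
          ≤ ∫ σ in Icc (0:ℝ) ω, |k a σ * (ψ σ 1 - φ σ 1)| := by
            have := norm_integral_le_integral_norm (μ := μ)
              (fun σ => k a σ * (ψ σ 1 - φ σ 1))
            simpa only [Real.norm_eq_abs] using this
        _ ≤ ∫ σ in Icc (0:ℝ) ω, Mk * |ψ σ 1 - φ σ 1| := by
            refine integral_mono_ae hint3.abs hint4 ?_
            filter_upwards [hka] with σ hσ
            rw [abs_mul]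
            exact mul_le_mul_of_nonneg_right hσ (abs_nonneg _)
        _ = Mk * I := by rw [hI, integral_const_mul]
    -- pointwise bound on the difference
    set g : ℝ → ℝ := fun a => 2 * c * |ψ a 0 - φ a 0| + 4 * (Mk * I) * |φ a 0| with hg
    have hInt1 : Integrable (fun a => 2 * c * |ψ a 0 - φ a 0|) μ := by
      have := (((comp_integrable ω ψ 0).sub (comp_integrable ω φ 0)).abs).const_mul (2 * c)
      simpa using this
    have hInt2 : Integrable (fun a => 4 * (Mk * I) * |φ a 0|) μ :=
      ((comp_integrable ω φ 0).abs).const_mul (4 * (Mk * I))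
    have hg_int : Integrable g μ := hInt1.add hInt2
    have hbound : ∀ᵐ a ∂μ, ‖(F ψ - F φ) a‖ ≤ g a := by
      filter_upwards [hF ψ, hF φ, hLam, Lp.coeFn_sub (F ψ) (F φ)] with a h1 h2 h3 h4
      have e1 : (F ψ) a = (WithLp.toLp 1 (fhatval ω k Ξ (⇑ψ) a) : V3) := PiLp.ext h1
      have e2 : (F φ) a = (WithLp.toLp 1 (fhatval ω k Ξ (⇑φ) a) : V3) := PiLp.ext h2
      rw [h4, Pi.sub_apply, e1, e2, v3norm]
      simp only [PiLp.sub_apply]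
      simp only [PiLp.toLp_apply, fhatval, Matrix.cons_val_zero, Matrix.cons_val_one, Matrix.head_cons,
        Matrix.cons_val_two, Matrix.tail_cons]
      set u := Lam ω k (fun σ => ψ σ 1) a
      set v := Lam ω k (fun σ => φ σ 1) a
      set x := ψ a 0
      set y := φ a 0
      have keyb : |Ξ u * x - Ξ v * y| ≤ c * |x - y| + 2 * (Mk * I) * |y| := by
        have hrw : Ξ u * x - Ξ v * y = Ξ u * (x - y) + (Ξ u - Ξ v) * y := by ring
        rw [hrw]
        calc |Ξ u * (x - y) + (Ξ u - Ξ v) * y|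
            ≤ |Ξ u * (x - y)| + |(Ξ u - Ξ v) * y| := abs_add_le _ _
          _ ≤ c * |x - y| + 2 * (Mk * I) * |y| := by
              rw [abs_mul, abs_mul]
              have t1 : |Ξ u| * |x - y| ≤ c * |x - y| :=
                mul_le_mul_of_nonneg_right (hΞbdd u) (abs_nonneg _)
              have t2 : |Ξ u - Ξ v| * |y| ≤ 2 * (Mk * I) * |y| := by
                refine mul_le_mul_of_nonneg_right ?_ (abs_nonneg _)
                calc |Ξ u - Ξ v| ≤ 2 * |u - v| := hΞlip u v
                  _ ≤ 2 * (Mk * I) := by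
                      have := h3
                      nlinarith [abs_nonneg (u - v)]
              linarith
      have hneg : |(-(Ξ u) * x) - (-(Ξ v) * y)| = |Ξ u * x - Ξ v * y| := by
        rw [show (-(Ξ u) * x) - (-(Ξ v) * y) = -(Ξ u * x - Ξ v * y) by ring, abs_neg]
      rw [hneg, sub_zero, abs_zero, hg]
      simp only []
      linarith
    -- conclude
    have hJ0 : ∫ a in Icc (0:ℝ) ω, |ψ a 0 - φ a 0| ≤ D := comp_diff_integral_le ω ψ φ 0
    have hJ0' : 0 ≤ ∫ a in Icc (0:ℝ) ω, |ψ a 0 - φ a 0| := integral_nonneg fun a => abs_nonneg _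
    have hK : ∫ a in Icc (0:ℝ) ω, |φ a 0| ≤ ρ := le_trans (comp_integral_le ω φ 0) hφρ
    have hK0 : 0 ≤ ∫ a in Icc (0:ℝ) ω, |φ a 0| := integral_nonneg fun a => abs_nonneg _
    calc ‖F ψ - F φ‖ = ∫ a, ‖(F ψ - F φ) a‖ ∂μ := L1.norm_eq_integral_norm _
      _ ≤ ∫ a, g a ∂μ :=
          integral_mono_ae (L1.integrable_coeFn (F ψ - F φ)).norm hg_int hbound
      _ = 2 * c * (∫ a in Icc (0:ℝ) ω, |ψ a 0 - φ a 0|)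
          + 4 * (Mk * I) * (∫ a in Icc (0:ℝ) ω, |φ a 0|) := by
          simp only [hg]
          rw [integral_add hInt1 hInt2, integral_const_mul, integral_const_mul]
      _ ≤ 2 * (c + 2 * ρ * Mk) * D := by
          nlinarith [mul_le_mul hID hK hK0 hD0, mul_nonneg hMk0 hD0,
            mul_nonneg (mul_nonneg hMk0 hI0) hK0]
  done
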